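/- Let p be a prime, r ≥ 1, and u2, v2, u3, v3 ∈ Z_{p^r} such that at least one of u2, u3, v2, v3 is a unit in Z_{p^r}. If u2·v3 − u3·v2 = 0 in Z_{p^r}, then the three points (0,0), (u2,v2), (u3,v3) in Z_{p^r}² are collinear. -/

import Mathlib

def CollinZero (n : ℕ) (u2 v2 u3 v3 : ZMod n) : Prop :=
  ∃ t1 t2 w2 w3 : ZMod n,
    w2 * t1 = u2 ∧ w3 * t1 = u3 ∧ w2 * t2 = v2 ∧ w3 * t2 = v3

theorem stmt6 (p : ℕ) (hp : p.Prime) (r : ℕ) (hr : 1 ≤ r)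
    (u2 v2 u3 v3 : ZMod (p ^ r))
    (hu : IsUnit u2 ∨ IsUnit u3 ∨ IsUnit v2 ∨ IsUnit v3)
    (h : u2 * v3 - u3 * v2 = 0) :
    CollinZero (p ^ r) u2 v2 u3 v3 := by
  have h' : u2 * v3 = u3 * v2 := by linear_combination h
  rcases hu with ⟨u, rfl⟩ | ⟨u, rfl⟩ | ⟨u, rfl⟩ | ⟨u, rfl⟩
  · exact ⟨u, v2, 1, u3 * (↑u⁻¹ : ZMod (p^r)), by simp, by simp, by simp, by
      linear_combination (-(↑u⁻¹ : ZMod (p^r))) * h' + v3 * u.inv_mul⟩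
  · exact ⟨u, v3, u2 * (↑u⁻¹ : ZMod (p^r)), 1, by simp, by simp, by
      linear_combination (↑u⁻¹ : ZMod (p^r)) * h' + v2 * u.inv_mul, by simp⟩
  · exact ⟨u2, u, 1, v3 * (↑u⁻¹ : ZMod (p^r)), by simp, by
      linear_combination (↑u⁻¹ : ZMod (p^r)) * h' + u3 * u.inv_mul, by simp, by simp⟩
  · exact ⟨u3, u, v2 * (↑u⁻¹ : ZMod (p^r)), 1, by
      linear_combination (-(↑u⁻¹ : ZMod (p^r))) * h' + u2 * u.inv_mul, by simp, by simp, by simp⟩
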